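/- Let χ be a bi-homomorphism on Π in the class X_fin (finite Kharchenko root system), n := |R^+(χ)|, and f : {1,...,n} → I a map such that the elements w_t := s^{χ_{f,1}}_{f(1)} ⋯ s^{χ₍f,t₎}_{f(t)} satisfy w_{y}(α_{f(y+1)}) ∈ R^+(χ) for all 1 ≤ y ≤ t-1. Then ℓ(w_t) = t, where ℓ(w) = |w(R^+(χ_{f,t})) ∩ (−Z≥0 Π)|. -/

import Mathlib

/-- `ℤΠ`, the free `ℤ`-module with basis `Π = {α_1,…,α_N}`. -/
abbrev Mz (N : ℕ) := Fin N →₀ ℤ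

/-- The simple "root" `α_i`, the `i`-th basis element of `ℤΠ`. -/
noncomputable def alphav {N : ℕ} (i : Fin N) : Mz N := Finsupp.single i 1

/-- A bi-homomorphism `χ : ℤΠ × ℤΠ → ℂ*`. -/
def IsBihom {N : ℕ} (χ : Mz N → Mz N → ℂˣ) : Prop :=
  (∀ a b c : Mz N, χ a (b + c) = χ a b * χ a c) ∧
  (∀ a b c : Mz N, χ (a + b) c = χ a c * χ b c)

/-- `(m)_t := 1 + t + ⋯ + t^{m-1}`. -/
noncomputable def qnum (m : ℕ) (t : ℂ) : ℂ := ∑ j ∈ Finset.range m, t ^ j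

/-- `(m)_t! := ∏_{j=1}^m (j)_t`. -/
noncomputable def qfact (m : ℕ) (t : ℂ) : ℂ := ∏ j ∈ Finset.range m, qnum (j + 1) t

/-- `(m; t₁, t₂)! := ∏_{j=1}^m (1 - t₁^{j-1} t₂)`. -/
noncomputable def tfact (m : ℕ) (t₁ t₂ : ℂ) : ℂ := ∏ j ∈ Finset.range m, (1 - t₁ ^ j * t₂)

/-- The Cartan entry `c` (off-diagonal part) attached to `q = q_{ii}` and `r = q_{ij}q_{ji}`:
`⊥` (i.e. `-∞`) if `(m)_q!(m;q,r)! ≠ 0` for all `m`, and otherwise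
`-Max{m ∈ ℤ≥0 | (m)_q!(m;q,r)! ≠ 0}`. -/
noncomputable def cEntry (q r : ℂ) : WithBot ℤ :=
  letI := Classical.propDecidable
  if ∀ m : ℕ, qfact m q * tfact m q r ≠ 0 then ⊥
  else ((-((sSup {m : ℕ | qfact m q * tfact m q r ≠ 0} : ℕ) : ℤ) : ℤ) : WithBot ℤ)

/-- The generalized Cartan matrix `c^χ_{ij}` of a bi-homomorphism `χ`. -/
noncomputable def cMat {N : ℕ} (χ : Mz N → Mz N → ℂˣ) (i j : Fin N) : WithBot ℤ :=
  if i = j then 2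
  else cEntry (χ (alphav i) (alphav i))
    ((χ (alphav i) (alphav j) : ℂ) * (χ (alphav j) (alphav i) : ℂ))

/-- `c^χ_{ij}` as an integer (junk value `0` in the `-∞` case). -/
noncomputable def cInt {N : ℕ} (χ : Mz N → Mz N → ℂˣ) (i j : Fin N) : ℤ :=
  (cMat χ i j).unbotD 0

/-- The reflection `s^χ_i ∈ Aut_ℤ(ℤΠ)`, `s^χ_i(α_j) = α_j - c^χ_{ij} α_i`,
extended `ℤ`-linearly. -/
noncomputable def sMap {N : ℕ} (χ : Mz N → Mz N → ℂˣ) (i : Fin N) (v : Mz N) : Mz N :=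
  v - (v.sum fun j n => n * cInt χ i j) • alphav i

/-- The Lusztig twist `i★χ`, `(i★χ)(α,β) := χ(s^χ_i α, s^χ_i β)`. -/
noncomputable def starB {N : ℕ} (i : Fin N) (χ : Mz N → Mz N → ℂˣ) :
    Mz N → Mz N → ℂˣ :=
  fun a b => χ (sMap χ i a) (sMap χ i b)

/-- χ' is obtained from χ by a finite sequence of Lusztig twists (χ' ∼ χ). -/
def Reachable {N : ℕ} (χ χ' : Mz N → Mz N → ℂˣ) : Prop :=
  ∃ l : List (Fin N), χ' = l.foldl (fun ψ i => starB i ψ) χ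

/-- The iterated twists χ_{f,t}: χ_{f,0} = χ and χ_{f,t} = f(t)★χ_{f,t-1}. -/
noncomputable def chif {N : ℕ} (χ : Mz N → Mz N → ℂˣ) (f : ℕ → Fin N) :
    ℕ → (Mz N → Mz N → ℂˣ)
  | 0 => χ
  | (t + 1) => starB (f (t + 1)) (chif χ f t)

/-- The partial products w_t = s^{χ_{f,1}}_{f(1)} ∘ ⋯ ∘ s^{χ_{f,t}}_{f(t)}. -/
noncomputable def wt {N : ℕ} (χ : Mz N → Mz N → ℂˣ) (f : ℕ → Fin N) :
    ℕ → (Mz N → Mz N)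
  | 0 => id
  | (t + 1) => wt χ f t ∘ sMap (chif χ f (t + 1)) (f (t + 1))

/-- The nonzero elements of ℤ≥0 Π. -/
def PosCone (N : ℕ) : Set (Mz N) := {v | v ≠ 0 ∧ ∀ k, 0 ≤ v k}

/-- The elements of -ℤ≥0 Π. -/
def NegCone (N : ℕ) : Set (Mz N) := {v | ∀ k, v k ≤ 0}

-- auxiliary lemmas
lemma sMap_eq {N : ℕ} (χ : Mz N → Mz N → ℂˣ) (i : Fin N) (v : Mz N) :
    sMap χ i v = v - (Finsupp.linearCombination ℤ (cInt χ i) v) • alphav i := by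
  simp [sMap, Finsupp.linearCombination_apply, smul_eq_mul]

lemma cInt_diag {N : ℕ} (χ : Mz N → Mz N → ℂˣ) (i : Fin N) : cInt χ i i = 2 := by
  simp [cInt, cMat]

lemma lin_alpha {N : ℕ} (χ : Mz N → Mz N → ℂˣ) (i : Fin N) :
    Finsupp.linearCombination ℤ (cInt χ i) (alphav i) = 2 := by
  simp [alphav, Finsupp.linearCombination_single, cInt_diag]

lemma sMap_invol {N : ℕ} (χ : Mz N → Mz N → ℂˣ) (i : Fin N) (v : Mz N) :
    sMap χ i (sMap χ i v) = v := by
  simp only [sMap_eq, map_sub, map_smul, lin_alpha, smul_eq_mul]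
  module

lemma sMap_alpha {N : ℕ} (χ : Mz N → Mz N → ℂˣ) (i : Fin N) :
    sMap χ i (alphav i) = - alphav i := by
  rw [sMap_eq, lin_alpha]; module

lemma sMap_neg {N : ℕ} (χ : Mz N → Mz N → ℂˣ) (i : Fin N) (v : Mz N) :
    sMap χ i (-v) = - sMap χ i v := by
  simp only [sMap_eq, map_neg]; module

lemma sMap_inj {N : ℕ} (χ : Mz N → Mz N → ℂˣ) (i : Fin N) :
    Function.Injective (sMap χ i) :=
  Function.LeftInverse.injective (g := sMap χ i) (sMap_invol χ i)

lemma reachable_refl {N : ℕ} (χ : Mz N → Mz N → ℂˣ) : Reachable χ χ := ⟨[], rfl⟩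

lemma reachable_star {N : ℕ} {χ χ' : Mz N → Mz N → ℂˣ} (h : Reachable χ χ') (i : Fin N) :
    Reachable χ (starB i χ') := by
  obtain ⟨l, rfl⟩ := h
  exact ⟨l ++ [i], by simp⟩

lemma reachable_chif {N : ℕ} (χ : Mz N → Mz N → ℂˣ) (f : ℕ → Fin N) (t : ℕ) :
    Reachable χ (chif χ f t) := by
  induction t with
  | zero => exact reachable_refl χ
  | succ t ih => exact reachable_star ih _

lemma wt_neg {N : ℕ} (χ : Mz N → Mz N → ℂˣ) (f : ℕ → Fin N) (t : ℕ) (v : Mz N) :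
    wt χ f t (-v) = - wt χ f t v := by
  induction t generalizing v with
  | zero => rfl
  | succ t ih => simp only [wt, Function.comp_apply, sMap_neg, ih]

lemma wt_inj {N : ℕ} (χ : Mz N → Mz N → ℂˣ) (f : ℕ → Fin N) (t : ℕ) :
    Function.Injective (wt χ f t) := by
  induction t with
  | zero => exact fun a b h => h
  | succ t ih => exact Function.Injective.comp ih (sMap_inj _ _)

lemma pos_not_neg {N : ℕ} {v : Mz N} (h : v ∈ PosCone N) : v ∉ NegCone N := by
  intro hn
  apply h.1
  ext k
  exact le_antisymm (hn k) (h.2 k)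

lemma neg_mem_neg {N : ℕ} {v : Mz N} (h : v ∈ PosCone N) : -v ∈ NegCone N := by
  intro k
  simpa using h.2 k

lemma neg_alpha_not_pos {N : ℕ} (i : Fin N) : -alphav i ∉ PosCone N := by
  intro h
  have := h.2 i
  simp [alphav, Finsupp.single_apply] at this

/-- Let χ be of finite type (finite Kharchenko positive root system R⁺), n = |R⁺(χ)|,
and f a word such that w_y(α_{f(y+1)}) ∈ R⁺(χ) for 1 ≤ y ≤ t-1. Then
ℓ(w_t) := |w_t(R⁺(χ_{f,t})) ∩ (-ℤ≥0Π)| = t. The hypotheses record the standard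
properties of Kharchenko's root systems along the Weyl groupoid. -/
theorem length_of_partial_word {N : ℕ} (χ : Mz N → Mz N → ℂˣ) (hχ : IsBihom χ)
    (Rp : (Mz N → Mz N → ℂˣ) → Set (Mz N))
    (hRfin : (Rp χ).Finite)
    (hRsub : ∀ χ', Reachable χ χ' → Rp χ' ⊆ PosCone N)
    (hRsimple : ∀ χ', Reachable χ χ' → ∀ i : Fin N, alphav i ∈ Rp χ')
    (hRrefl : ∀ χ', Reachable χ χ' → ∀ i : Fin N,
      sMap χ' i '' (Rp χ' \ {alphav i}) = Rp (starB i χ') \ {alphav i})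
    (hstar : ∀ χ', Reachable χ χ' → ∀ i : Fin N,
      starB i (starB i χ') = χ' ∧ sMap (starB i χ') i = sMap χ' i)
    (f : ℕ → Fin N) (t : ℕ) (ht1 : 1 ≤ t) (ht2 : t ≤ (Rp χ).ncard)
    (hpos : ∀ y : ℕ, 1 ≤ y → y ≤ t - 1 → wt χ f y (alphav (f (y + 1))) ∈ Rp χ) :
    ((wt χ f t '' Rp (chif χ f t)) ∩ NegCone N).ncard = t := by
  -- finiteness of all Rp (chif χ f u)
  have hfin : ∀ u : ℕ, (Rp (chif χ f u)).Finite := by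
    intro u
    induction u with
    | zero => exact hRfin
    | succ u ih =>
      have h := hRrefl _ (reachable_chif χ f u) (f (u + 1))
      have hsub : Rp (chif χ f (u + 1)) ⊆
          insert (alphav (f (u + 1)))
            (sMap (chif χ f u) (f (u + 1)) '' (Rp (chif χ f u) \ {alphav (f (u + 1))})) := by
        rw [h]
        intro x hx
        rcases eq_or_ne x (alphav (f (u + 1))) with h1 | h1
        · exact Set.mem_insert_iff.mpr (Or.inl h1)
        · exact Set.mem_insert_of_mem _ ⟨hx, h1⟩
      exact Set.Finite.subset (Set.Finite.insert _ (Set.Finite.image _ (Set.Finite.diff ih))) hsub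
  -- the key step identity
  have key : ∀ u : ℕ, wt χ f u (alphav (f (u + 1))) ∈ Rp χ →
      (wt χ f (u + 1) '' Rp (chif χ f (u + 1))) ∩ NegCone N =
        insert (- wt χ f u (alphav (f (u + 1))))
          ((wt χ f u '' Rp (chif χ f u)) ∩ NegCone N) := by
    intro u ha
    set χ' := chif χ f u with hχ'
    set i := f (u + 1) with hi
    have hreach : Reachable χ χ' := reachable_chif χ f u
    have hreach' : Reachable χ (starB i χ') := reachable_star hreach i
    have hchif1 : chif χ f (u + 1) = starB i χ' := rfl
    have hsEq : sMap (chif χ f (u + 1)) i = sMap χ' i := by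
      rw [hchif1]; exact (hstar χ' hreach i).2
    -- image of R⁺(i★χ') under s_i
    have himg : sMap χ' i '' (Rp (starB i χ') \ {alphav i}) = Rp χ' \ {alphav i} := by
      have h := hRrefl χ' hreach i
      calc sMap χ' i '' (Rp (starB i χ') \ {alphav i})
          = sMap χ' i '' (sMap χ' i '' (Rp χ' \ {alphav i})) := by rw [h]
        _ = Rp χ' \ {alphav i} := by
            rw [Set.image_image]
            simp only [sMap_invol, Set.image_id']
    have hsplit : Rp (starB i χ') = (Rp (starB i χ') \ {alphav i}) ∪ {alphav i} := by
      have := hRsimple _ hreach' i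
      rw [Set.diff_union_self]
      exact (Set.union_eq_self_of_subset_right (Set.singleton_subset_iff.mpr this)).symm
    have himg2 : sMap χ' i '' Rp (starB i χ') = (Rp χ' \ {alphav i}) ∪ {- alphav i} := by
      rw [hsplit, Set.image_union, himg, Set.image_singleton, sMap_alpha]
    have hw1 : wt χ f (u + 1) '' Rp (chif χ f (u + 1)) =
        (wt χ f u '' Rp χ' \ {wt χ f u (alphav i)}) ∪ {- wt χ f u (alphav i)} := by
      have : wt χ f (u + 1) '' Rp (chif χ f (u + 1)) =
          wt χ f u '' (sMap χ' i '' Rp (starB i χ')) := by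
        rw [show wt χ f (u + 1) = wt χ f u ∘ sMap (chif χ f (u + 1)) (f (u + 1)) from rfl,
          Set.image_comp, ← hi, hsEq, hchif1]
      rw [this, himg2, Set.image_union, Set.image_singleton, wt_neg,
        Set.image_diff (wt_inj χ f u), Set.image_singleton]
    set a := wt χ f u (alphav i) with haa
    have hapos : a ∈ PosCone N := hRsub χ (reachable_refl χ) ha
    have ha_not_neg : a ∉ NegCone N := pos_not_neg hapos
    have hna_neg : -a ∈ NegCone N := neg_mem_neg hapos
    rw [hw1]
    ext x
    simp only [Set.mem_inter_iff, Set.mem_union, Set.mem_diff, Set.mem_singleton_iff,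
      Set.mem_insert_iff]
    constructor
    · rintro ⟨(⟨hxA, hxa⟩ | rfl), hxneg⟩
      · exact Or.inr ⟨hxA, hxneg⟩
      · exact Or.inl rfl
    · rintro (rfl | ⟨hxA, hxneg⟩)
      · exact ⟨Or.inr rfl, hna_neg⟩
      · exact ⟨Or.inl ⟨hxA, fun h => ha_not_neg (h ▸ hxneg)⟩, hxneg⟩
  -- -w_u(α_i) is never in w_u '' Rp χ'
  have hnotmem : ∀ u : ℕ, - wt χ f u (alphav (f (u + 1))) ∉ wt χ f u '' Rp (chif χ f u) := by
    intro u hmem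
    obtain ⟨β, hβ, hβeq⟩ := hmem
    rw [← wt_neg] at hβeq
    have : β = - alphav (f (u + 1)) := wt_inj χ f u hβeq
    subst this
    exact neg_alpha_not_pos _ (hRsub _ (reachable_chif χ f u) hβ)
  -- main induction
  have main : ∀ u : ℕ, (∀ y : ℕ, 1 ≤ y → y + 1 ≤ u → wt χ f y (alphav (f (y + 1))) ∈ Rp χ) →
      ((wt χ f u '' Rp (chif χ f u)) ∩ NegCone N).ncard = u := by
    intro u
    induction u with
    | zero =>
      intro _
      have : (wt χ f 0 '' Rp (chif χ f 0)) ∩ NegCone N = ∅ := by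
        ext x
        simp only [Set.mem_inter_iff, Set.mem_empty_iff_false, iff_false]
        rintro ⟨⟨β, hβ, rfl⟩, hneg⟩
        exact pos_not_neg (hRsub χ (reachable_refl χ) hβ) hneg
      rw [this, Set.ncard_empty]
    | succ u ih =>
      intro hp
      have hau : wt χ f u (alphav (f (u + 1))) ∈ Rp χ := by
        rcases Nat.eq_zero_or_pos u with rfl | hu
        · exact hRsimple χ (reachable_refl χ) (f 1)
        · exact hp u hu (by omega)
      rw [key u hau, Set.ncard_insert_of_notMem
        (fun h => hnotmem u h.1)
        (Set.Finite.subset (Set.Finite.image _ (hfin u)) Set.inter_subset_left),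
        ih (fun y hy hyu => hp y hy (by omega))]
  exact main t (fun y hy hyt => hpos y hy (by omega))
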